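/- arXiv:1504.05365 — 3 statements merged into one kernel-verified Lean document; each statement's English description precedes it below -/
import Mathlib

section
/- Let a,b,A,B ∈ ℕ with b > 0, B > 0, gcd(a,b) = 1, and assume b > 1 or B ∤ A. Let h,k ∈ ℕ with k > 0 and gcd(h,k) = 1. Then the following are equivalent: (i) there exists n ≥ 1 such that (ζ_b^a ζ_k^{hA}; ζ_k^{hB})_n · (ζ_b^{−a} ζ_k^{h(B−A)}; ζ_k^{hB})_n = 0 (i.e., some denominator of the series g₃(ζ_b^a ζ_k^{hA}, ζ_k^{hB}) vanishes); (ii) b | k and gcd(k,B) | (ak/b + Ah). -/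
open Complex Filter Finset

/-- `e2pi r = e^{2 π i r}`; thus `ζ_k^h = e2pi (h/k)`. -/
noncomputable def e2pi (r : ℝ) : ℂ := Complex.exp (2 * Real.pi * Complex.I * r)

/-- The finite q-Pochhammer symbol `(a;q)_n = ∏_{j=0}^{n-1} (1 - a q^j)`. -/
noncomputable def qPoch (a q : ℂ) (n : ℕ) : ℂ := ∏ j ∈ Finset.range n, (1 - a * q ^ j)

/-- The infinite q-Pochhammer symbol `(a;q)_∞ = ∏_{j=0}^{∞} (1 - a q^j)`. -/
noncomputable def qPochInf (a q : ℂ) : ℂ := ∏' j : ℕ, (1 - a * q ^ j)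

/-- The Jacobi triple product `j(x,q) = (x;q)_∞ (q/x;q)_∞ (q;q)_∞`. -/
noncomputable def jac (x q : ℂ) : ℂ := qPochInf x q * qPochInf (q / x) q * qPochInf q q

/-- The universal mock theta function
`g₃(x,q) = ∑_{n≥1} q^{n(n-1)} / ((x;q)_n (q/x;q)_n)` (indexed here by `n+1`, `n : ℕ`). -/
noncomputable def g₃ (x q : ℂ) : ℂ :=
  ∑' n : ℕ, q ^ (n * (n + 1)) / (qPoch x q (n + 1) * qPoch (q / x) q (n + 1))

/-- `qrad h k t = ζ_k^h e^{-t}`. -/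
noncomputable def qrad (h k : ℕ) (t : ℝ) : ℂ := e2pi ((h : ℝ) / k) * Real.exp (-t)

/-- `srad h k B t = e^{π i h B / k} e^{-tB/2}`, a square root of `(qrad h k t)^B`. -/
noncomputable def srad (h k B : ℕ) (t : ℝ) : ℂ :=
  Complex.exp (Real.pi * Complex.I * ((h : ℝ) * B / k)) * Real.exp (-(t * B / 2))

/-- The Appell–Lerch sum `m(X,q,z)`. -/
noncomputable def appellM (X q z : ℂ) : ℂ :=
  (1 / jac z q) * ∑' n : ℤ, (-z) ^ n * q ^ ((n * (n - 1)) / 2) / (1 - X * z * q ^ (n - 1))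

lemma e2pi_mul (r s : ℝ) : e2pi r * e2pi s = e2pi (r + s) := by
  simp [e2pi, ← Complex.exp_add]; ring_nf

lemma e2pi_pow (r : ℝ) (j : ℕ) : e2pi r ^ j = e2pi (j * r) := by
  simp [e2pi, ← Complex.exp_nat_mul]; ring_nf

lemma e2pi_eq_one (r : ℝ) : e2pi r = 1 ↔ ∃ m : ℤ, r = m := by
  rw [e2pi, Complex.exp_eq_one_iff]
  have h2 : (2 * (Real.pi:ℂ) * Complex.I) ≠ 0 := by
    simp [Real.pi_ne_zero, Complex.I_ne_zero]
  constructor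
  · rintro ⟨m, hm⟩
    refine ⟨m, ?_⟩
    have h3 : (2 * (Real.pi:ℂ) * Complex.I) * r = (2 * (Real.pi:ℂ) * Complex.I) * m := by
      rw [hm]; ring
    have := mul_left_cancel₀ h2 h3
    exact_mod_cast this
  · rintro ⟨m, hm⟩
    exact ⟨m, by rw [hm]; push_cast; ring⟩

lemma nt (a b A B h k : ℕ) (hb : 0 < b) (hk : 0 < k) (hab : Nat.gcd a b = 1)
    (hhk : Nat.gcd h k = 1) :
    (∃ m m' : ℤ, (a:ℤ)*k + b*((h:ℤ)*((A:ℤ)+m*B)) = m'*(b*k)) ↔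
      (b ∣ k ∧ Nat.gcd k B ∣ (a * k / b + A * h)) := by
  constructor
  · rintro ⟨m, m', he⟩
    have hbk : b ∣ k := by
      have h1 : (b:ℤ) ∣ (a:ℤ)*k := ⟨m'*k - h*((A:ℤ)+m*B), by linarith [he]⟩
      have h2 : b ∣ a*k := by exact_mod_cast h1
      exact (Nat.Coprime.dvd_of_dvd_mul_left (Nat.coprime_comm.mp hab) h2)
    obtain ⟨k', hk'⟩ := hbk
    subst hk'
    have hb0 : (b:ℤ) ≠ 0 := by exact_mod_cast hb.ne'
    have heq : (a:ℤ)*k' + h*((A:ℤ)+m*B) = m'*(b*k') := by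
      have : (b:ℤ) * ((a:ℤ)*k' + h*((A:ℤ)+m*B)) = (b:ℤ) * (m'*(b*k')) := by
        push_cast at he ⊢; ring_nf; ring_nf at he; linarith
      exact mul_left_cancel₀ hb0 this
    refine ⟨⟨k', rfl⟩, ?_⟩
    have hd1 : ((Nat.gcd (b*k') B : ℕ):ℤ) ∣ ((b:ℤ)*k') := by
      exact_mod_cast Nat.gcd_dvd_left (b*k') B
    have hd2 : ((Nat.gcd (b*k') B : ℕ):ℤ) ∣ (B:ℤ) := by
      exact_mod_cast Nat.gcd_dvd_right (b*k') B
    have hdint : ((Nat.gcd (b*k') B : ℕ):ℤ) ∣ ((a:ℤ)*k' + A*h) := by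
      have : (a:ℤ)*k' + A*h = m'*(b*k') - m*(h*B) + (h*A - A*h) := by linarith [heq]
      rw [this]
      have t1 : ((Nat.gcd (b*k') B : ℕ):ℤ) ∣ m'*(b*k') := Dvd.dvd.mul_left hd1 m'
      have t2 : ((Nat.gcd (b*k') B : ℕ):ℤ) ∣ m*(h*B) :=
        Dvd.dvd.mul_left (Dvd.dvd.mul_left hd2 h) m
      have : (h:ℤ)*A - A*h = 0 := by ring
      rw [this, add_zero]
      exact dvd_sub t1 t2
    have : a * (b*k') / b = a * k' := by
      rw [show a * (b*k') = b * (a*k') by ring, Nat.mul_div_cancel_left _ hb]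
    rw [this]
    exact_mod_cast hdint
  · rintro ⟨⟨k', rfl⟩, hd⟩
    have hak : a * (b*k') / b = a * k' := by
      rw [show a * (b*k') = b * (a*k') by ring, Nat.mul_div_cancel_left _ hb]
    rw [hak] at hd
    -- Bezout
    set g : ℕ := Nat.gcd (h*B) (b*k') with hg
    have hgd : g = Nat.gcd (b*k') B := by
      rw [hg, Nat.Coprime.gcd_mul_left_cancel B hhk, Nat.gcd_comm]
    set u : ℤ := Int.gcdA (h*B) (b*k') with hu
    set v : ℤ := Int.gcdB (h*B) (b*k') with hv
    have hbez : (g:ℤ) = (h:ℤ)*B*u + (b:ℤ)*k'*v := by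
      have := Int.gcd_eq_gcd_ab ((h*B : ℕ):ℤ) ((b*k' : ℕ):ℤ)
      rw [Int.gcd_natCast_natCast] at this
      push_cast at this ⊢
      linarith
    obtain ⟨t, ht⟩ := hd
    have htz : (a:ℤ)*k' + A*h = (g:ℤ)*t := by
      rw [hgd]; exact_mod_cast congrArg (Nat.cast : ℕ → ℤ) ht
    refine ⟨-(t*u), t*v, ?_⟩
    push_cast
    linear_combination (b:ℤ)*htz + (b:ℤ)*t*hbez

theorem stmt8 (a b A B : ℕ) (hb : 0 < b) (hBpos : 0 < B) (hab : Nat.gcd a b = 1)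
    (hbBA : 1 < b ∨ ¬ B ∣ A)
    (h k : ℕ) (hk : 0 < k) (hhk : Nat.gcd h k = 1) :
    (∃ n : ℕ, 1 ≤ n ∧
        qPoch (e2pi ((a : ℝ) / b) * e2pi ((h : ℝ) * A / k)) (e2pi ((h : ℝ) * B / k)) n
          * qPoch (e2pi (-((a : ℝ) / b)) * e2pi ((h : ℝ) * ((B : ℝ) - A) / k))
              (e2pi ((h : ℝ) * B / k)) n = 0)
      ↔ (b ∣ k ∧ Nat.gcd k B ∣ (a * k / b + A * h)) := by
  have hb0 : (b:ℝ) ≠ 0 := Nat.cast_ne_zero.mpr hb.ne'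
  have hk0 : (k:ℝ) ≠ 0 := Nat.cast_ne_zero.mpr hk.ne'
  -- step 1: LHS ↔ ∃ j, factor vanishes
  have step1 : (∃ n : ℕ, 1 ≤ n ∧
        qPoch (e2pi ((a : ℝ) / b) * e2pi ((h : ℝ) * A / k)) (e2pi ((h : ℝ) * B / k)) n
          * qPoch (e2pi (-((a : ℝ) / b)) * e2pi ((h : ℝ) * ((B : ℝ) - A) / k))
              (e2pi ((h : ℝ) * B / k)) n = 0)
      ↔ ∃ j : ℕ,
          (1 - (e2pi ((a : ℝ) / b) * e2pi ((h : ℝ) * A / k)) * e2pi ((h : ℝ) * B / k) ^ j = 0)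
          ∨ (1 - (e2pi (-((a : ℝ) / b)) * e2pi ((h : ℝ) * ((B : ℝ) - A) / k))
              * e2pi ((h : ℝ) * B / k) ^ j = 0) := by
    unfold qPoch
    constructor
    · rintro ⟨n, hn, hprod⟩
      rcases mul_eq_zero.mp hprod with hz | hz
      · obtain ⟨j, _, hj⟩ := Finset.prod_eq_zero_iff.mp hz
        exact ⟨j, Or.inl hj⟩
      · obtain ⟨j, _, hj⟩ := Finset.prod_eq_zero_iff.mp hz
        exact ⟨j, Or.inr hj⟩
    · rintro ⟨j, hj | hj⟩
      · exact ⟨j+1, Nat.succ_le_succ (Nat.zero_le _),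
          mul_eq_zero.mpr (Or.inl (Finset.prod_eq_zero (Finset.self_mem_range_succ j) hj))⟩
      · exact ⟨j+1, Nat.succ_le_succ (Nat.zero_le _),
          mul_eq_zero.mpr (Or.inr (Finset.prod_eq_zero (Finset.self_mem_range_succ j) hj))⟩
  rw [step1]
  -- step 2: factors as e2pi = 1
  have f1 : ∀ j : ℕ,
      (1 - (e2pi ((a : ℝ) / b) * e2pi ((h : ℝ) * A / k)) * e2pi ((h : ℝ) * B / k) ^ j = 0)
      ↔ ∃ m' : ℤ, (a:ℝ)/b + h*A/k + j*(h*B/k) = m' := by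
    intro j
    rw [sub_eq_zero, eq_comm, e2pi_pow, e2pi_mul, e2pi_mul, e2pi_eq_one]
  have f2 : ∀ j : ℕ,
      (1 - (e2pi (-((a : ℝ) / b)) * e2pi ((h : ℝ) * ((B : ℝ) - A) / k))
          * e2pi ((h : ℝ) * B / k) ^ j = 0)
      ↔ ∃ m' : ℤ, -((a:ℝ)/b) + h*((B:ℝ)-A)/k + j*(h*B/k) = m' := by
    intro j
    rw [sub_eq_zero, eq_comm, e2pi_pow, e2pi_mul, e2pi_mul, e2pi_eq_one]
  -- step 3
  have step3 : (∃ j : ℕ,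
          (1 - (e2pi ((a : ℝ) / b) * e2pi ((h : ℝ) * A / k)) * e2pi ((h : ℝ) * B / k) ^ j = 0)
          ∨ (1 - (e2pi (-((a : ℝ) / b)) * e2pi ((h : ℝ) * ((B : ℝ) - A) / k))
              * e2pi ((h : ℝ) * B / k) ^ j = 0))
      ↔ ∃ m m' : ℤ, (a:ℝ)/b + h*((A:ℝ)+m*B)/k = m' := by
    constructor
    · rintro ⟨j, hj | hj⟩
      · obtain ⟨m', hm'⟩ := (f1 j).mp hj
        refine ⟨(j:ℤ), m', ?_⟩
        have heq : (a:ℝ)/b + (h:ℝ)*((A:ℝ)+((j:ℤ):ℝ)*B)/k = (a:ℝ)/b + h*A/k + j*(h*B/k) := by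
          push_cast; ring
        rw [heq]; exact hm'
      · obtain ⟨m', hm'⟩ := (f2 j).mp hj
        refine ⟨-((j:ℤ)+1), -m', ?_⟩
        have : (a:ℝ)/b + h*((A:ℝ)+((-((j:ℤ)+1)):ℤ)*B)/k
            = -(-((a:ℝ)/b) + h*((B:ℝ)-A)/k + j*(h*B/k)) := by push_cast; ring
        rw [this, hm']; push_cast; ring
    · rintro ⟨m, m', hm⟩
      rcases le_or_gt 0 m with hm0 | hm0
      · refine ⟨m.toNat, Or.inl ((f1 m.toNat).mpr ⟨m', ?_⟩)⟩
        have hj : ((m.toNat : ℕ):ℝ) = (m:ℝ) := by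
          exact_mod_cast congrArg (Int.cast : ℤ → ℝ) (Int.toNat_of_nonneg hm0)
        rw [show (a:ℝ)/b + h*A/k + (m.toNat:ℕ)*(h*B/k)
            = (a:ℝ)/b + h*A/k + ((m.toNat:ℕ):ℝ)*(h*B/k) by norm_cast, hj]
        rw [show (a:ℝ)/b + (h:ℝ)*A/k + (m:ℝ)*((h:ℝ)*B/k) = (a:ℝ)/b + h*((A:ℝ)+m*B)/k by ring]
        exact hm
      · refine ⟨(-m-1).toNat, Or.inr ((f2 (-m-1).toNat).mpr ⟨-m', ?_⟩)⟩
        have hj : (((-m-1).toNat : ℕ):ℝ) = ((-m-1 : ℤ):ℝ) := by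
          exact_mod_cast congrArg (Int.cast : ℤ → ℝ) (Int.toNat_of_nonneg (by omega))
        rw [show -((a:ℝ)/b) + h*((B:ℝ)-A)/k + ((-m-1).toNat:ℕ)*(h*B/k)
            = -((a:ℝ)/b) + h*((B:ℝ)-A)/k + (((-m-1).toNat:ℕ):ℝ)*(h*B/k) by norm_cast, hj]
        have : -((a:ℝ)/b) + h*((B:ℝ)-A)/k + ((-m-1:ℤ):ℝ)*(h*B/k)
            = -((a:ℝ)/b + h*((A:ℝ)+m*B)/k) := by push_cast; ring
        rw [this, hm]; push_cast; ring
  rw [step3]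
  have bridge : ∀ m m' : ℤ, ((a:ℝ)/b + (h:ℝ)*((A:ℝ)+m*B)/k = m')
      ↔ ((a:ℤ)*k + b*((h:ℤ)*((A:ℤ)+m*B)) = m'*(b*k)) := by
    intro m m'
    rw [div_add_div _ _ hb0 hk0, div_eq_iff (mul_ne_zero hb0 hk0)]
    constructor <;> intro H <;> exact_mod_cast H
  exact (exists_congr fun m => exists_congr fun m' => bridge m m').trans
    (nt a b A B h k hb hk hab hhk)
end

section
/- Let q ∈ ℂ with 0 < |q| < 1 and let x ∈ ℂ \ {0} with x ∉ {q^m : m ∈ ℤ}. Then g₃(x^{−1}, q) = g₃(xq, q) = −x³ g₃(x,q) − x² − x. -/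
open Complex Filter Finset

lemma qPoch_succ (a q : ℂ) (n : ℕ) : qPoch a q (n+1) = qPoch a q n * (1 - a * q ^ n) :=
  Finset.prod_range_succ _ _

lemma qPoch_succ' (a q : ℂ) (n : ℕ) : qPoch a q (n+1) = (1 - a) * qPoch (a*q) q n := by
  rw [qPoch, Finset.prod_range_succ']
  rw [mul_comm, pow_zero, mul_one, qPoch]
  congr 1
  exact Finset.prod_congr rfl fun i _ => by ring

lemma qPoch_ne_zero {a q : ℂ} (h : ∀ j, 1 - a * q ^ j ≠ 0) (n : ℕ) : qPoch a q n ≠ 0 :=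
  Finset.prod_ne_zero_iff.2 fun j _ => h j

lemma one_sub_sum_le_prod (s : Finset ℕ) (f : ℕ → ℝ) (h0 : ∀ j ∈ s, 0 ≤ f j)
    (h1 : ∀ j ∈ s, f j ≤ 1) :
    1 - ∑ j ∈ s, f j ≤ ∏ j ∈ s, (1 - f j) := by
  induction s using Finset.cons_induction with
  | empty => simp
  | cons a s ha ih =>
    rw [Finset.sum_cons, Finset.prod_cons]
    have hs : 0 ≤ ∑ j ∈ s, f j := Finset.sum_nonneg fun j hj => h0 j (Finset.mem_cons_of_mem hj)
    have ih' := ih (fun j hj => h0 j (Finset.mem_cons_of_mem hj))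
      (fun j hj => h1 j (Finset.mem_cons_of_mem hj))
    have ha0 := h0 a (Finset.mem_cons_self _ _)
    have ha1 := h1 a (Finset.mem_cons_self _ _)
    nlinarith

lemma qPoch_lb {a q : ℂ} (hq1 : ‖q‖ < 1) (h : ∀ j, 1 - a * q ^ j ≠ 0) :
    ∃ c > 0, ∀ n, c ≤ ‖qPoch a q n‖ := by
  set r : ℕ → ℝ := fun j => ‖a‖ * ‖q‖ ^ j with hr
  have hr0 : ∀ j, 0 ≤ r j := fun j =>
    mul_nonneg (norm_nonneg a) (pow_nonneg (norm_nonneg q) j)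
  have hsumr : Summable r :=
    (summable_geometric_of_lt_one (norm_nonneg q) hq1).mul_left _
  have htail : Tendsto (fun N => ∑' i, r (i + N)) atTop (nhds 0) :=
    tendsto_sum_nat_add r
  obtain ⟨N, hN⟩ := (htail.eventually (eventually_le_nhds (by norm_num : (0:ℝ) < 1/2))).exists
  have hsum_shift : Summable fun i => r (i + N) := (summable_nat_add_iff N).2 hsumr
  have htail_le : ∀ s : Finset ℕ, (∀ j ∈ s, N ≤ j) → ∑ j ∈ s, r j ≤ 1/2 := by
    intro s hsN
    have key : ∑ j ∈ s, r j ≤ ∑' i, r (i + N) := by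
      calc ∑ j ∈ s, r j = ∑ i ∈ s.image (· - N), r (i + N) := by
            rw [Finset.sum_image (fun j1 h1 j2 h2 he => by
              have := hsN j1 h1; have := hsN j2 h2; omega)]
            exact Finset.sum_congr rfl fun j hj => by
              rw [Nat.sub_add_cancel (hsN j hj)]
          _ ≤ ∑' i, r (i + N) := Summable.sum_le_tsum _ (fun i _ => hr0 _) hsum_shift
    linarith
  have hrle : ∀ j, N ≤ j → r j ≤ 1/2 := by
    intro j hj
    have := htail_le {j} (by simp [hj])
    simpa using this
  set g : ℕ → ℝ := fun j => if j < N then min (‖1 - a * q ^ j‖) 1 else 1 - r j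
    with hg
  have hg_pos : ∀ j, 0 < g j := by
    intro j
    by_cases hj : j < N
    · simp only [hg, if_pos hj]
      exact lt_min (norm_pos_iff.2 (h j)) one_pos
    · simp only [hg, if_neg hj]
      have := hrle j (le_of_not_gt hj); linarith
  have hg_le_one : ∀ j, g j ≤ 1 := by
    intro j
    by_cases hj : j < N
    · simp only [hg, if_pos hj]; exact min_le_right _ _
    · simp only [hg, if_neg hj]; have := hr0 j; linarith
  have hg_le : ∀ j, g j ≤ ‖1 - a * q ^ j‖ := by
    intro j
    by_cases hj : j < N
    · simp only [hg, if_pos hj]; exact min_le_left _ _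
    · simp only [hg, if_neg hj]
      have h1 : ‖a * q ^ j‖ = r j := by
        simp [hr, norm_mul, norm_pow]
      calc 1 - r j = ‖(1:ℂ)‖ - ‖a * q ^ j‖ := by rw [h1]; simp
        _ ≤ ‖1 - a * q ^ j‖ := norm_sub_norm_le 1 (a * q ^ j)
  refine ⟨(∏ j ∈ Finset.range N, g j) * (1/2),
    mul_pos (Finset.prod_pos fun j _ => hg_pos j) (by norm_num), fun n => ?_⟩
  have step1 : (∏ j ∈ Finset.range N, g j) * (1/2) ≤ ∏ j ∈ Finset.range n, g j := by
    rcases le_or_gt n N with hnN | hNn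
    · have hsplit : ∏ j ∈ Finset.range N, g j
          = (∏ j ∈ Finset.range n, g j) * ∏ j ∈ Finset.Ico n N, g j := by
        rw [Finset.range_eq_Ico, ← Finset.prod_Ico_consecutive _ (Nat.zero_le n) hnN,
          ← Finset.range_eq_Ico]
      have h2 : ∏ j ∈ Finset.Ico n N, g j ≤ 1 :=
        Finset.prod_le_one (fun j _ => (hg_pos j).le) (fun j _ => hg_le_one j)
      have h3 : 0 < ∏ j ∈ Finset.range n, g j := Finset.prod_pos fun j _ => hg_pos j
      calc (∏ j ∈ Finset.range N, g j) * (1/2)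
          ≤ ∏ j ∈ Finset.range N, g j := by
            have : 0 < ∏ j ∈ Finset.range N, g j := Finset.prod_pos fun j _ => hg_pos j
            linarith
        _ = (∏ j ∈ Finset.range n, g j) * ∏ j ∈ Finset.Ico n N, g j := hsplit
        _ ≤ (∏ j ∈ Finset.range n, g j) * 1 := mul_le_mul_of_nonneg_left h2 h3.le
        _ = ∏ j ∈ Finset.range n, g j := mul_one _
    · have hsplit : ∏ j ∈ Finset.range n, g j
          = (∏ j ∈ Finset.range N, g j) * ∏ j ∈ Finset.Ico N n, g j := by
        rw [Finset.range_eq_Ico, ← Finset.prod_Ico_consecutive _ (Nat.zero_le N) hNn.le,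
          ← Finset.range_eq_Ico]
      have hIco : ∏ j ∈ Finset.Ico N n, g j = ∏ j ∈ Finset.Ico N n, (1 - r j) :=
        Finset.prod_congr rfl fun j hj => by
          simp only [hg, if_neg (not_lt.2 (Finset.mem_Ico.1 hj).1)]
      have hge : (1:ℝ)/2 ≤ ∏ j ∈ Finset.Ico N n, (1 - r j) := by
        have := one_sub_sum_le_prod (Finset.Ico N n) r
          (fun j _ => hr0 j)
          (fun j hj => by
            have := hrle j (Finset.mem_Ico.1 hj).1; linarith)
        have hsle := htail_le (Finset.Ico N n) (fun j hj => (Finset.mem_Ico.1 hj).1)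
        linarith
      rw [hsplit, hIco]
      exact mul_le_mul_of_nonneg_left hge (Finset.prod_pos fun j _ => hg_pos j).le
  have step2 : ∏ j ∈ Finset.range n, g j ≤ ‖qPoch a q n‖ := by
    rw [qPoch, norm_prod]
    exact Finset.prod_le_prod (fun j _ => (hg_pos j).le) (fun j _ => hg_le j)
  linarith

lemma summable_aux {q : ℂ} (hq1 : ‖q‖ < 1) {c : ℝ} (hc : 0 < c) (den : ℕ → ℂ)
    (hden : ∀ n, c ≤ ‖den n‖) (e : ℕ → ℕ) (he : ∀ n, n ≤ e n) :
    Summable (fun n => q ^ (e n) / den n) := by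
  apply Summable.of_norm_bounded (g := fun n => (1/c) * ‖q‖ ^ n)
  · exact ((summable_geometric_of_lt_one (norm_nonneg q) hq1).mul_left _)
  · intro n
    have hdn : den n ≠ 0 := by
      intro h0
      have := hden n
      rw [h0] at this
      simp at this
      linarith
    rw [norm_div, norm_pow]
    have h1 : ‖q‖ ^ (e n) ≤ ‖q‖ ^ n :=
      pow_le_pow_of_le_one (norm_nonneg q) hq1.le (he n)
    have h2 : (0:ℝ) < ‖den n‖ := norm_pos_iff.2 hdn
    have h3 : c ≤ ‖den n‖ := hden n
    calc ‖q‖ ^ (e n) / ‖den n‖ ≤ ‖q‖ ^ n / ‖den n‖ := by gcongr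
      _ ≤ ‖q‖ ^ n / c := by
          apply div_le_div_of_nonneg_left (pow_nonneg (norm_nonneg q) n) hc h3
      _ = 1/c * ‖q‖ ^ n := by rw [one_div, inv_mul_eq_div]

lemma key_alg (x p w u v s t G : ℂ) (hx : x ≠ 0) (hp : p ≠ 0) (hw : w ≠ 0)
    (hu : u ≠ 0) (hv : v ≠ 0) (h1x : 1 - x ≠ 0)
    (hG : (1 - x) * G = p * u) (hus : u = 1 - x * s) (hvs : v = 1 - s / x) :
    t / (G * ((1 - x⁻¹) * w)) + x^3 * (t / (p * (w * v)))
      = x*(x^2-1) * t / (p * w) - x*(x^2-1) * (t * s^2) / ((p*u) * (w*v)) := by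
  have hGe : G = p * u / (1 - x) := by
    rw [eq_div_iff h1x, mul_comm G (1-x)]; exact hG
  subst hGe
  have hxv : x * v = x - s := by rw [hvs]; field_simp
  have hden : (p * u / (1 - x)) * ((1 - x⁻¹) * w) = -(p * u * w / x) := by
    field_simp; ring
  rw [hden, div_neg, div_div_eq_mul_div]
  have hD : p * u * w * v ≠ 0 :=
    mul_ne_zero (mul_ne_zero (mul_ne_zero hp hu) hw) hv
  have e1 : t * x / (p * u * w) = (t * x * v) / (p * u * w * v) := by
    rw [div_eq_div_iff (mul_ne_zero (mul_ne_zero hp hu) hw) hD]; ring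
  have e2 : x^3 * (t / (p * (w * v))) = (x^3 * t * u) / (p * u * w * v) := by
    rw [mul_div_assoc', div_eq_div_iff (mul_ne_zero hp (mul_ne_zero hw hv)) hD]; ring
  have e3 : x*(x^2-1) * t / (p * w) = (x*(x^2-1) * t * (u*v)) / (p * u * w * v) := by
    rw [div_eq_div_iff (mul_ne_zero hp hw) hD]; ring
  have e4 : x*(x^2-1) * (t * s^2) / ((p*u) * (w*v))
      = (x*(x^2-1) * (t * s^2)) / (p * u * w * v) := by
    rw [div_eq_div_iff (mul_ne_zero (mul_ne_zero hp hu) (mul_ne_zero hw hv)) hD]; ring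
  rw [e1, e2, e3, e4, ← neg_div, ← add_div, div_sub_div_same]
  congr 1
  subst hus
  linear_combination (-(x*t*(x - x^2*s + s))) * hxv

theorem stmt12 (q x : ℂ) (hq0 : 0 < ‖q‖) (hq1 : ‖q‖ < 1)
    (hx : x ≠ 0) (hxq : ∀ m : ℤ, x ≠ q ^ m) :
    g₃ x⁻¹ q = g₃ (x * q) q ∧ g₃ (x * q) q = -x ^ 3 * g₃ x q - x ^ 2 - x := by
  have hqne : q ≠ 0 := by
    intro h0; rw [h0] at hq0; simp at hq0
  have h1 : ∀ j : ℕ, 1 - x * q ^ j ≠ 0 := by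
    intro j hzero
    apply hxq (-(j:ℤ))
    have hxqj : x * q ^ j = 1 := by linear_combination -hzero
    have hxe : x = (q ^ j)⁻¹ := eq_inv_of_mul_eq_one_left (by linear_combination -hzero)
    rw [hxe, zpow_neg, zpow_natCast]
  have h2 : ∀ j : ℕ, 1 - (q/x) * q ^ j ≠ 0 := by
    intro j hzero
    apply hxq ((j:ℤ)+1)
    have hq2 : q * q ^ j = x := by
      field_simp at hzero
      linear_combination -hzero
    rw [show ((j:ℤ)+1) = (((j+1):ℕ):ℤ) by push_cast; ring, zpow_natCast, pow_succ]
    rw [← hq2]; ring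
  have h3 : ∀ j : ℕ, 1 - (x*q) * q ^ j ≠ 0 := by
    intro j hzero
    apply h1 (j+1)
    rw [pow_succ]
    linear_combination hzero
  have h4 : ∀ j : ℕ, 1 - x⁻¹ * q ^ j ≠ 0 := by
    intro j hzero
    apply hxq (j:ℤ)
    have hxqj : x⁻¹ * q ^ j = 1 := by linear_combination -hzero
    rw [zpow_natCast]
    exact ((inv_mul_eq_one₀ hx).1 hxqj)
  have h1x : (1:ℂ) - x ≠ 0 := by simpa using h1 0
  obtain ⟨c1, hc1, hP⟩ := qPoch_lb hq1 h1
  obtain ⟨c2, hc2, hQ⟩ := qPoch_lb hq1 h2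
  obtain ⟨c3, hc3, hG3⟩ := qPoch_lb hq1 h3
  obtain ⟨c4, hc4, hI⟩ := qPoch_lb hq1 h4
  set A : ℕ → ℂ := fun n => q ^ (n*(n+1)) / (qPoch x q (n+1) * qPoch (q/x) q (n+1))
    with hAdef
  set B : ℕ → ℂ := fun n => q ^ (n*(n+1)) / (qPoch (x*q) q (n+1) * qPoch x⁻¹ q (n+1))
    with hBdef
  set C : ℕ → ℂ := fun n => x*(x^2-1) * q ^ (n*(n+1)) / (qPoch x q (n+1) * qPoch (q/x) q n)
    with hCdef
  have he : ∀ n : ℕ, n ≤ n*(n+1) := fun n => Nat.le_mul_of_pos_right n (Nat.succ_pos n)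
  have hA : Summable A := by
    apply summable_aux hq1 (mul_pos hc1 hc2) _ _ _ he
    intro n
    rw [norm_mul]
    exact mul_le_mul (hP _) (hQ _) hc2.le (norm_nonneg _)
  have hB : Summable B := by
    apply summable_aux hq1 (mul_pos hc3 hc4) _ _ _ he
    intro n
    rw [norm_mul]
    exact mul_le_mul (hG3 _) (hI _) hc4.le (norm_nonneg _)
  have hCsum : Summable C := by
    have base : Summable (fun n : ℕ => q ^ (n*(n+1)) / (qPoch x q (n+1) * qPoch (q/x) q n)) := by
      apply summable_aux hq1 (mul_pos hc1 hc2) _ _ _ he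
      intro n
      rw [norm_mul]
      exact mul_le_mul (hP _) (hQ _) hc2.le (norm_nonneg _)
    have := base.mul_left (x*(x^2-1))
    simpa only [hCdef, mul_div_assoc] using this
  have hC0 : Tendsto C atTop (nhds 0) := hCsum.tendsto_atTop_zero
  have key : ∀ n : ℕ, B n + x^3 * A n = C n - C (n+1) := by
    intro n
    have hp := qPoch_ne_zero h1 (n+1)
    have hw := qPoch_ne_zero h2 n
    have hu := h1 (n+1)
    have hv := h2 n
    have hBn : B n = q^(n*(n+1)) / (qPoch (x*q) q (n+1) * ((1 - x⁻¹) * qPoch (q/x) q n)) := by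
      have hIQ : qPoch x⁻¹ q (n+1) = (1 - x⁻¹) * qPoch (q/x) q n := by
        rw [qPoch_succ']
        congr 2
        field_simp
      simp only [hBdef, hIQ]
    have hAn : A n = q^(n*(n+1))
        / (qPoch x q (n+1) * (qPoch (q/x) q n * (1 - (q/x)*q^n))) := by
      simp only [hAdef]
      rw [qPoch_succ (q/x) q n]
    have hCn1 : C (n+1) = x*(x^2-1) * (q^(n*(n+1)) * (q^(n+1))^2)
        / ((qPoch x q (n+1) * (1 - x*q^(n+1))) * (qPoch (q/x) q n * (1 - (q/x)*q^n))) := by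
      have hnum : q ^ ((n+1) * (n+1+1)) = q ^ (n*(n+1)) * (q^(n+1))^2 := by
        rw [← pow_mul, ← pow_add]
        congr 1
        ring
      simp only [hCdef]
      rw [qPoch_succ x q (n+1), qPoch_succ (q/x) q n, hnum]
    have hG : (1-x) * qPoch (x*q) q (n+1) = qPoch x q (n+1) * (1 - x*q^(n+1)) := by
      rw [← qPoch_succ', qPoch_succ]
    have hvs : (1 : ℂ) - (q/x)*q^n = 1 - q^(n+1)/x := by
      rw [pow_succ]; ring
    rw [hBn, hAn, hCn1]
    simp only [hCdef]
    exact key_alg x (qPoch x q (n+1)) (qPoch (q/x) q n) (1 - x*q^(n+1)) (1 - (q/x)*q^n)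
      (q^(n+1)) (q^(n*(n+1))) (qPoch (x*q) q (n+1)) hx hp hw hu hv h1x hG rfl hvs
  have hDsum : Summable (fun n => C n - C (n+1)) :=
    hCsum.sub ((summable_nat_add_iff 1).2 hCsum)
  have htel : ∑' n : ℕ, (C n - C (n+1)) = C 0 := by
    have hA1 := hDsum.hasSum.tendsto_sum_nat
    have heq : (fun n => ∑ i ∈ Finset.range n, (C i - C (i+1))) = fun n => C 0 - C n :=
      funext fun n => Finset.sum_range_sub' C n
    rw [heq] at hA1
    have hA2 : Tendsto (fun n => C 0 - C n) atTop (nhds (C 0 - 0)) :=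
      tendsto_const_nhds.sub hC0
    have := tendsto_nhds_unique hA1 hA2
    rw [this, sub_zero]
  have hg3x : g₃ x q = ∑' n, A n := by rw [g₃, hAdef]
  have hg3xq : g₃ (x*q) q = ∑' n, B n := by
    rw [g₃]
    apply tsum_congr; intro n
    have e2 : q / (x*q) = x⁻¹ := by
      field_simp
    rw [e2]
  have hC0val : C 0 = -x^2 - x := by
    have hq1' : qPoch x q 1 = 1 - x := by simp [qPoch]
    have hq0' : qPoch (q/x) q 0 = 1 := by simp [qPoch]
    rw [hCdef]
    simp only [Nat.zero_mul, pow_zero, hq1', hq0', mul_one]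
    rw [div_eq_iff h1x]
    ring
  have hsum : ∑' n, B n = C 0 - x^3 * g₃ x q := by
    have hBeq : ∀ n, B n = (C n - C (n+1)) - x^3 * A n := fun n => by
      rw [← key n]; ring
    calc ∑' n, B n = ∑' n, ((C n - C (n+1)) - x^3 * A n) := tsum_congr hBeq
      _ = (∑' n, (C n - C (n+1))) - ∑' n, x^3 * A n := Summable.tsum_sub hDsum (hA.mul_left _)
      _ = C 0 - x^3 * ∑' n, A n := by rw [htel, tsum_mul_left]
      _ = C 0 - x^3 * g₃ x q := by rw [hg3x]
  constructor
  · rw [g₃, g₃]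
    apply tsum_congr; intro n
    have e1 : q / x⁻¹ = x*q := by
      rw [div_eq_mul_inv, inv_inv, mul_comm]
    have e2 : q / (x*q) = x⁻¹ := by
      field_simp
    rw [e1, e2, mul_comm (qPoch x⁻¹ q (n+1))]
  · rw [hg3xq, hsum, hC0val]
    ring
end

section
/- Let K ≥ 1, let q be a primitive K-th root of unity, and let x be a root of unity such that (x;q)_n (q/x;q)_n ≠ 0 for all n ≥ 1. Then the series ∑_{n=1}^{∞} q^{n(n−1)} / ( (x;q)_n (q/x;q)_n ) converges absolutely if and only if Re(x^K) < 1/2, and in that case its sum equals [1/(1 − 1/((1 − x^K)(1 − x^{−K})))] · ∑_{j=1}^{K} q^{j(j−1)} / ( (x;q)_j (q/x;q)_j ). -/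
open Complex Filter Finset

theorem stmt13 (K : ℕ) (hK : 1 ≤ K) (q x : ℂ) (hq : IsPrimitiveRoot q K)
    (hx : ∃ n : ℕ, 0 < n ∧ x ^ n = 1)
    (hden : ∀ n : ℕ, 1 ≤ n → qPoch x q n * qPoch (q / x) q n ≠ 0) :
    ((Summable fun n : ℕ =>
        ‖q ^ (n * (n + 1)) / (qPoch x q (n + 1) * qPoch (q / x) q (n + 1))‖)
      ↔ (x ^ K).re < 1 / 2) ∧
    ((x ^ K).re < 1 / 2 →
      g₃ x q = (1 / (1 - 1 / ((1 - x ^ K) * (1 - x⁻¹ ^ K))))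
        * ∑ j ∈ Finset.Icc 1 K, q ^ (j * (j - 1)) / (qPoch x q j * qPoch (q / x) q j)) := by
  have hK0 : 0 < K := hK
  haveI : NeZero K := ⟨hK0.ne'⟩
  have hqK : q ^ K = 1 := hq.pow_eq_one
  obtain ⟨N, hN0, hxN⟩ := hx
  have hx0 : x ≠ 0 := by
    intro h; rw [h, zero_pow hN0.ne'] at hxN; exact zero_ne_one hxN
  have hxabs : ‖x‖ = 1 := by
    have h1 : ‖x‖ ^ N = 1 := by
      rw [← norm_pow, hxN, norm_one]
    have h2 : (0:ℝ) ≤ ‖x‖ := norm_nonneg x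
    rcases (pow_eq_one_iff_cases).1 h1 with h | h | h
    · omega
    · exact h
    · exfalso; nlinarith [h.1]
  -- the key product formula over one period
  have hprodroot : ∀ y : ℂ, ∏ j ∈ Finset.range K, (y - q ^ j) = y ^ K - 1 := by
    intro y
    have h1 := Polynomial.X_pow_sub_one_eq_prod hK0 hq
    have h2 := congrArg (Polynomial.eval y) h1
    simp only [Polynomial.eval_sub, Polynomial.eval_pow, Polynomial.eval_X, Polynomial.eval_one,
      Polynomial.eval_prod, Polynomial.eval_C] at h2
    rw [h2]
    have hinj : Set.InjOn (fun j => q ^ j) (Finset.range K) := by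
      intro i hi j hj hij
      exact hq.pow_inj (Finset.mem_range.1 hi) (Finset.mem_range.1 hj) hij
    have himg : Polynomial.nthRootsFinset K (1 : ℂ) = (Finset.range K).image (fun j => q ^ j) := by
      symm
      apply Finset.eq_of_subset_of_card_le
      · intro z hz
        simp only [Finset.mem_image, Finset.mem_range] at hz
        obtain ⟨j, hj, rfl⟩ := hz
        exact (Polynomial.mem_nthRootsFinset hK0 (1 : ℂ)).2
          (by rw [← pow_mul, mul_comm, pow_mul, hqK, one_pow])
      · rw [hq.card_nthRootsFinset, Finset.card_image_of_injOn hinj, Finset.card_range]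
    rw [himg, Finset.prod_image hinj]
  have L1 : ∀ a : ℂ, qPoch a q K = 1 - a ^ K := by
    intro a
    rcases eq_or_ne a 0 with rfl | ha
    · simp [qPoch, zero_pow hK0.ne']
    · have haK : a ^ K ≠ 0 := pow_ne_zero _ ha
      unfold qPoch
      have hterm : ∀ j ∈ Finset.range K, 1 - a * q ^ j = a * (a⁻¹ - q ^ j) := by
        intro j _; field_simp
      rw [Finset.prod_congr rfl hterm, Finset.prod_mul_distrib, Finset.prod_const,
        Finset.card_range, hprodroot a⁻¹, inv_pow]
      field_simp
  -- periodicity of qPoch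
  have L2 : ∀ (a : ℂ) (m : ℕ), qPoch a q (m + K) = qPoch a q m * (1 - a ^ K) := by
    intro a m
    unfold qPoch
    rw [Finset.prod_range_add]
    congr 1
    have : ∀ i ∈ Finset.range K, 1 - a * q ^ (m + i) = 1 - (a * q ^ m) * q ^ i := by
      intro i _; rw [pow_add]; ring
    rw [Finset.prod_congr rfl this]
    have := L1 (a * q ^ m)
    unfold qPoch at this
    rw [this, mul_pow, ← pow_mul, mul_comm m K, pow_mul, hqK, one_pow, mul_one]
  have hqxK : (q / x) ^ K = x⁻¹ ^ K := by
    rw [div_pow, hqK, inv_pow, one_div]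
  -- the term sequence
  set a : ℕ → ℂ := fun n => q ^ (n * (n + 1)) / (qPoch x q (n + 1) * qPoch (q / x) q (n + 1))
    with ha_def
  set c : ℂ := ((1 - x ^ K) * (1 - x⁻¹ ^ K))⁻¹ with hc_def
  set w : ℂ := x ^ K with hw_def
  have hwabs : ‖w‖ = 1 := by rw [hw_def, norm_pow, hxabs, one_pow]
  have hconj : x⁻¹ ^ K = starRingEnd ℂ w := by
    rw [Complex.inv_eq_conj hxabs, ← map_pow]
  set r : ℝ := 2 - 2 * w.re with hr_def
  have hprodr : (1 - x ^ K) * (1 - x⁻¹ ^ K) = (r : ℂ) := by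
    rw [hconj, ← hw_def]
    have h1 : w * starRingEnd ℂ w = 1 := by
      rw [Complex.mul_conj, Complex.normSq_eq_norm_sq]
      norm_cast
      rw [hwabs, one_pow]
    have h2 : w + starRingEnd ℂ w = ((2 * w.re : ℝ) : ℂ) := Complex.add_conj w
    rw [hr_def]
    push_cast at h2 ⊢
    linear_combination h1 - h2
  have hrne : r ≠ 0 := by
    intro h
    apply hden K hK
    rw [L1 x, L1 (q / x), hqxK, hprodr, h]
    simp
  have hrle : w.re ≤ 1 := le_trans (Complex.re_le_norm w) (le_of_eq hwabs)
  have hrpos : 0 < r := by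
    rcases lt_or_eq_of_le (by rw [hr_def]; linarith : (0:ℝ) ≤ r) with h | h
    · exact h
    · exact absurd h.symm hrne
  have hc_eq : c = ((r : ℝ) : ℂ)⁻¹ := by rw [hc_def, hprodr]
  have hcnorm : ‖c‖ = r⁻¹ := by
    rw [hc_eq, norm_inv, Complex.norm_real, Real.norm_eq_abs, abs_of_pos hrpos]
  -- the step recursion
  have hstep : ∀ n : ℕ, a (n + K) = a n * c := by
    intro n
    have hnum : q ^ ((n + K) * (n + K + 1)) = q ^ (n * (n + 1)) := by
      have he : (n + K) * (n + K + 1) = n * (n + 1) + K * (2 * n + K + 1) := by ring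
      rw [he, pow_add, pow_mul q K, hqK, one_pow, mul_one]
    have hd1 : qPoch x q (n + 1 + K) = qPoch x q (n + 1) * (1 - x ^ K) := by
      rw [L2 x (n + 1)]
    have hd2 : qPoch (q / x) q (n + 1 + K) = qPoch (q / x) q (n + 1) * (1 - x⁻¹ ^ K) := by
      rw [L2 (q / x) (n + 1), hqxK]
    show q ^ ((n + K) * (n + K + 1)) / (qPoch x q (n + K + 1) * qPoch (q / x) q (n + K + 1))
      = a n * c
    have hidx : n + K + 1 = n + 1 + K := by ring
    rw [hnum, hidx, hd1, hd2, ha_def, hc_def]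
    simp only [div_eq_mul_inv, mul_inv]
    ring
  have hiter : ∀ (m j : ℕ), a (j + m * K) = a j * c ^ m := by
    intro m
    induction m with
    | zero => intro j; simp
    | succ m ih =>
      intro j
      have : j + (m + 1) * K = (j + m * K) + K := by ring
      rw [this, hstep, ih, pow_succ, mul_assoc]
  set ρ : ℝ := r⁻¹ with hρ_def
  have hρpos : 0 < ρ := inv_pos.2 hrpos
  have hcond : (x ^ K).re < 1 / 2 ↔ ρ < 1 := by
    rw [hρ_def, inv_lt_one_iff₀]
    constructor
    · intro h; right; rw [hr_def]; simp only [← hw_def] at h ⊢; linarith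
    · rintro (h | h)
      · linarith
      · rw [hr_def] at h; simp only [← hw_def]; linarith
  -- the equivalence ℕ ≃ ℕ × Fin K
  set e := Nat.divModEquiv K with he_def
  have hae : ∀ p : ℕ × Fin K, a (e.symm p) = a p.2 * c ^ p.1 := by
    intro p
    show a (p.1 * K + (p.2 : ℕ)) = a p.2 * c ^ p.1
    rw [add_comm, hiter]
  have hanorm : ∀ p : ℕ × Fin K, ‖a (e.symm p)‖ = ‖a (p.2 : ℕ)‖ * ρ ^ p.1 := by
    intro p
    rw [hae, norm_mul, norm_pow, hcnorm]
  have ha0ne : a 0 ≠ 0 := by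
    rw [ha_def]
    simp only [Nat.zero_mul, pow_zero]
    rw [div_ne_zero_iff]
    exact ⟨one_ne_zero, hden 1 le_rfl⟩
  -- summability equivalence
  have hsumm_iff : (Summable fun n : ℕ => ‖a n‖) ↔ ρ < 1 := by
    constructor
    · intro hs
      by_contra hρ
      push_neg at hρ
      have htend : Tendsto (fun n => ‖a n‖) atTop (nhds 0) := hs.tendsto_atTop_zero
      have hmk : Tendsto (fun m : ℕ => m * K) atTop atTop :=
        tendsto_atTop_mono (fun m => Nat.le_mul_of_pos_right m hK0) tendsto_id
      have htend2 : Tendsto (fun m : ℕ => ‖a (m * K)‖) atTop (nhds 0) := htend.comp hmk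
      have hge : ∀ m : ℕ, ‖a 0‖ ≤ ‖a (m * K)‖ := by
        intro m
        have : a (0 + m * K) = a 0 * c ^ m := hiter m 0
        rw [zero_add] at this
        rw [this, norm_mul, norm_pow, hcnorm]
        have h1 : (1:ℝ) ≤ ρ ^ m := one_le_pow₀ hρ
        calc ‖a 0‖ = ‖a 0‖ * 1 := (mul_one _).symm
          _ ≤ ‖a 0‖ * ρ ^ m := by
              exact mul_le_mul_of_nonneg_left h1 (norm_nonneg _)
      have h0 : (0:ℝ) < ‖a 0‖ := norm_pos_iff.2 ha0ne
      have := le_of_tendsto_of_tendsto tendsto_const_nhds htend2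
        (Filter.Eventually.of_forall hge)
      linarith
    · intro hρ1
      rw [← (e.symm).summable_iff]
      have heq : ((fun n : ℕ => ‖a n‖) ∘ e.symm) = fun p : ℕ × Fin K => ‖a (p.2 : ℕ)‖ * ρ ^ p.1 := by
        funext p; exact hanorm p
      rw [heq]
      rw [summable_prod_of_nonneg]
      · constructor
        · intro m
          exact Summable.of_finite
        · have : ∀ m : ℕ, (∑' j : Fin K, ‖a (j : ℕ)‖ * ρ ^ m) = (∑ j : Fin K, ‖a (j : ℕ)‖) * ρ ^ m := by
            intro m
            rw [tsum_fintype, ← Finset.sum_mul]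
          simp only [this]
          exact (summable_geometric_of_lt_one hρpos.le hρ1).mul_left _
      · intro p
        positivity
  have hfinsum : (∑ j : Fin K, a (j : ℕ))
      = ∑ j ∈ Finset.Icc 1 K, q ^ (j * (j - 1)) / (qPoch x q j * qPoch (q / x) q j) := by
    rw [Fin.sum_univ_eq_sum_range, show Finset.Icc 1 K = Finset.Ico 1 (K + 1) from (Finset.Ico_add_one_right_eq_Icc 1 K).symm, Finset.sum_Ico_eq_sum_range]
    apply Finset.sum_congr (by norm_num)
    intro i _
    rw [ha_def]
    have h1 : 1 + i - 1 = i := by omega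
    have h2 : (1 + i) * i = i * (i + 1) := by ring
    have h3 : 1 + i = i + 1 := by ring
    simp only [h1, h2, h3]
    rw [Nat.add_sub_cancel, Nat.mul_comm (i + 1) i]
  refine ⟨hsumm_iff.trans hcond.symm, ?_⟩
  intro hre
  have hρ1 : ρ < 1 := hcond.1 hre
  have hsn : Summable fun n : ℕ => ‖a n‖ := hsumm_iff.2 hρ1
  have hsa : Summable a := hsn.of_norm
  have hcnorm1 : ‖c‖ < 1 := by rw [hcnorm]; exact hρ1
  have hF : Summable fun p : ℕ × Fin K => a (p.2 : ℕ) * c ^ p.1 := by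
    have := (e.symm).summable_iff.2 hsa
    refine this.congr fun p => ?_
    exact hae p
  have htsum : g₃ x q = (∑ j : Fin K, a (j : ℕ)) * (1 - c)⁻¹ := by
    have h1 : g₃ x q = ∑' n, a n := rfl
    have h2 : ∑' n, a n = ∑' p : ℕ × Fin K, a (e.symm p) := (Equiv.tsum_eq e.symm a).symm
    have h3 : ∑' p : ℕ × Fin K, a (e.symm p) = ∑' p : ℕ × Fin K, a (p.2 : ℕ) * c ^ p.1 :=
      tsum_congr hae
    rw [h1, h2, h3, Summable.tsum_prod' hF (fun m => Summable.of_finite)]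
    have h4 : ∀ m : ℕ, (∑' j : Fin K, a (j : ℕ) * c ^ m) = (∑ j : Fin K, a (j : ℕ)) * c ^ m := by
      intro m; rw [tsum_fintype, ← Finset.sum_mul]
    simp only [h4]
    rw [tsum_mul_left, tsum_geometric_of_norm_lt_one hcnorm1, ← div_eq_mul_inv, div_eq_mul_inv]
  rw [htsum, hfinsum, mul_comm]
  congr 1
  rw [one_div, hc_def, one_div]
end
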